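/- arXiv:1410.6296 — 2 statements merged into one kernel-verified Lean document; each statement's English description precedes it below -/
import Mathlib

section
/- Under the BI Model, for the Benjamini–Hochberg step-up test with critical values α_{i:n} = (i/n)α, α ∈ (0,1), the FDR equals (E[N_0]/n)·α, where N_0 = Σ_{i=1}^n (1 - H_i) is the (random) number of true null hypotheses. -/
open MeasureTheory ProbabilityTheory Finset
open scoped Classical

/-- number of p-values `≤ t`. -/
noncomputable def countLe {n : ℕ} (p : Fin n → ℝ) (t : ℝ) : ℕ :=
  (Finset.univ.filter fun i => p i ≤ t).card

/-- step-up rejection count: `c i` is the `(i+1)`-th critical value; for nondecreasing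
critical values this equals `max {k : p_{k:n} ≤ c_{k:n}}` (with `max ∅ = 0`). -/
noncomputable def suCount {n : ℕ} (c : Fin n → ℝ) (p : Fin n → ℝ) : ℕ :=
  (Finset.univ.filter fun k : Fin n => k.1 + 1 ≤ countLe p (c k)).sup fun k => k.1 + 1

/-- step-down rejection count. -/
noncomputable def sdCount {n : ℕ} (c : Fin n → ℝ) (p : Fin n → ℝ) : ℕ :=
  (Finset.univ.filter fun k : Fin n =>
    ∀ j : Fin n, j ≤ k → j.1 + 1 ≤ countLe p (c j)).sup fun k => k.1 + 1

/-- the critical value `c_{R:n}`, with the convention `c_{0:n} = 0`. -/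
noncomputable def threshold {n : ℕ} (c : Fin n → ℝ) (R : ℕ) : ℝ :=
  if h : 0 < R ∧ R ≤ n then c ⟨R - 1, by omega⟩ else 0

/-- the σ-algebra generated by `(F̂_n(t))_{t ≥ λ}`. -/
noncomputable def ecdfSigma {Ω : Type*} [MeasurableSpace Ω] {n : ℕ}
    (p : Fin n → Ω → ℝ) (lam : ℝ) : MeasurableSpace Ω :=
  MeasurableSpace.comap
    (fun ω => fun t : Set.Ici lam => (countLe (fun i => p i ω) (t : ℝ) : ℝ))
    MeasurableSpace.pi

section MeasAux

variable {α : Type*} [MeasurableSpace α]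

lemma measurable_decide {P : α → Prop} [DecidablePred P] (hP : MeasurableSet {a | P a}) :
    Measurable fun a => decide (P a) := by
  apply measurable_to_countable'
  intro b
  cases b
  · convert hP.compl using 1
    ext a; simp
  · convert hP using 1
    ext a; simp

lemma measurable_countLe {n : ℕ} (t : ℝ) : Measurable fun p : Fin n → ℝ => countLe p t := by
  have h : (fun p : Fin n → ℝ => countLe p t)
      = (fun b : Fin n → Bool => (Finset.univ.filter fun i => b i = true).card)
        ∘ (fun p i => decide (p i ≤ t)) := by
    funext p
    simp only [Function.comp, countLe]
    congr 1
    apply Finset.filter_congr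
    intro i _
    simp
  rw [h]
  exact (measurable_of_countable _).comp
    (measurable_pi_lambda _ fun i =>
      measurable_decide (measurableSet_le (measurable_pi_apply i) measurable_const))

lemma measurable_suCount {n : ℕ} (c : Fin n → ℝ) :
    Measurable fun p : Fin n → ℝ => suCount c p := by
  have h : (fun p : Fin n → ℝ => suCount c p)
      = (fun b : Fin n → Bool =>
          (Finset.univ.filter fun k : Fin n => b k = true).sup fun k => k.1 + 1)
        ∘ (fun p k => decide (k.1 + 1 ≤ countLe p (c k))) := by
    funext p
    simp only [Function.comp, suCount]
    congr 1
    apply Finset.filter_congr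
    intro k _
    simp
  rw [h]
  refine (measurable_of_countable _).comp (measurable_pi_lambda _ fun k => measurable_decide ?_)
  exact (measurable_countLe (c k)) (Set.to_countable _).measurableSet

end MeasAux

section Comb

variable {m : ℕ} {a : ℝ} {p : Fin (m + 1) → ℝ} {i : Fin (m + 1)}

/-- the BH critical values. -/
noncomputable def crit (m : ℕ) (a : ℝ) : Fin (m + 1) → ℝ :=
  fun k : Fin (m + 1) => ((k.1 + 1 : ℝ) / (m + 1)) * a

lemma crit_pos (ha : 0 < a) (k : Fin (m + 1)) : 0 < crit m a k := by
  unfold crit; positivity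

lemma le_suCount {c : Fin (m + 1) → ℝ} {k : Fin (m + 1)}
    (h : k.1 + 1 ≤ countLe p (c k)) : k.1 + 1 ≤ suCount c p :=
  Finset.le_sup (f := fun k : Fin (m + 1) => k.1 + 1)
    (Finset.mem_filter.2 ⟨Finset.mem_univ _, h⟩)

lemma suCount_le (c : Fin (m + 1) → ℝ) (p : Fin (m + 1) → ℝ) : suCount c p ≤ m + 1 :=
  Finset.sup_le fun k _ => k.isLt

lemma exists_eq_suCount {c : Fin (m + 1) → ℝ} (h : 0 < suCount c p) :
    ∃ k : Fin (m + 1), k.1 + 1 ≤ countLe p (c k) ∧ k.1 + 1 = suCount c p := by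
  rcases Finset.eq_empty_or_nonempty
      (Finset.univ.filter fun k : Fin (m + 1) => k.1 + 1 ≤ countLe p (c k)) with he | hne
  · exfalso
    unfold suCount at h
    rw [he] at h
    simp at h
  · obtain ⟨k, hk, hsup⟩ := Finset.exists_mem_eq_sup _ hne fun k : Fin (m + 1) => k.1 + 1
    exact ⟨k, (Finset.mem_filter.1 hk).2, hsup.symm⟩

lemma countLe_mono {t t' : ℝ} (h : t ≤ t') : countLe p t ≤ countLe p t' :=
  Finset.card_le_card (Finset.monotone_filter_right _ fun j _ hj => le_trans hj h)

lemma countLe_update_le {t : ℝ} (ht : 0 ≤ t) :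
    countLe p t ≤ countLe (Function.update p i 0) t := by
  apply Finset.card_le_card
  apply Finset.monotone_filter_right
  intro j _ hj
  rcases eq_or_ne j i with rfl | hne
  · simpa using ht
  · simpa [Function.update_apply, hne] using hj

lemma countLe_update_eq {t : ℝ} (ht : 0 ≤ t) (hpi : p i ≤ t) :
    countLe (Function.update p i 0) t = countLe p t := by
  unfold countLe
  congr 1
  apply Finset.filter_congr
  intro j _
  rcases eq_or_ne j i with rfl | hne
  · simp [ht, hpi]
  · simp [Function.update_apply, hne]

lemma one_le_suCount_update (ha : 0 < a) :
    1 ≤ suCount (crit m a) (Function.update p i 0) := by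
  have h0 : Function.update p i 0 i ≤ crit m a 0 := by
    simp [le_of_lt (crit_pos ha 0)]
  have hc : 1 ≤ countLe (Function.update p i 0) (crit m a 0) :=
    Finset.card_pos.2 ⟨i, Finset.mem_filter.2 ⟨Finset.mem_univ _, h0⟩⟩
  simpa using le_suCount (k := 0) (by simpa using hc)

lemma crit_cast (ha : 0 < a) {R : ℕ} (h1 : 1 ≤ R) (h2 : R ≤ m + 1) :
    crit m a ⟨R - 1, by omega⟩ = (R : ℝ) / (m + 1) * a := by
  unfold crit
  have : ((R - 1 : ℕ) : ℝ) + 1 = (R : ℝ) := by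
    rw [Nat.cast_sub h1]; push_cast; ring
  rw [this]

lemma suCount_update_eq (ha : 0 < a)
    (hpa : p i ≤ (suCount (crit m a) p : ℝ) / (m + 1) * a) :
    suCount (crit m a) (Function.update p i 0) = suCount (crit m a) p := by
  set R := suCount (crit m a) p with hRdef
  have hRle : R ≤ m + 1 := suCount_le _ _
  have hRpos : 0 < R := by
    by_contra hcon
    have hR0 : R = 0 := by omega
    rw [hR0] at hpa
    simp only [Nat.cast_zero, zero_div, zero_mul] at hpa
    have h0 : p i ≤ crit m a 0 := le_trans hpa (le_of_lt (crit_pos ha 0))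
    have hc : 1 ≤ countLe p (crit m a 0) :=
      Finset.card_pos.2 ⟨i, Finset.mem_filter.2 ⟨Finset.mem_univ _, h0⟩⟩
    have := le_suCount (k := 0) (by simpa using hc)
    omega
  have hkey : crit m a ⟨R - 1, by omega⟩ = (R : ℝ) / (m + 1) * a := crit_cast ha hRpos hRle
  obtain ⟨k, hk, hkR⟩ := exists_eq_suCount hRpos
  have hkR' : k.1 + 1 = R := hkR
  have hck : crit m a k = (R : ℝ) / (m + 1) * a := by
    rw [← hkey]
    congr 1
    exact Fin.ext (by simp only [Fin.val_mk]; omega)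
  apply le_antisymm
  · -- suCount update ≤ R
    apply Finset.sup_le
    intro k' hk'
    rw [Finset.mem_filter] at hk'
    by_cases hle : p i ≤ crit m a k'
    · have heq : countLe (Function.update p i 0) (crit m a k') = countLe p (crit m a k') :=
        countLe_update_eq (le_of_lt (crit_pos ha k')) hle
      exact le_suCount (heq ▸ hk'.2)
    · push_neg at hle
      have hlt : crit m a k' < (R : ℝ) / (m + 1) * a := lt_of_lt_of_le hle hpa
      have hpos : (0 : ℝ) < a / (m + 1) := by positivity
      have hlt2 : (k'.1 + 1 : ℝ) * (a / (m + 1)) < (R : ℝ) * (a / (m + 1)) := by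
        calc (k'.1 + 1 : ℝ) * (a / (m + 1)) = ((k'.1 + 1 : ℝ) / (m + 1)) * a := by ring
          _ < (R : ℝ) / (m + 1) * a := hlt
          _ = (R : ℝ) * (a / (m + 1)) := by ring
      have := lt_of_mul_lt_mul_right hlt2 hpos.le
      exact_mod_cast this.le
  · -- R ≤ suCount update
    have hcnt : R ≤ countLe (Function.update p i 0) (crit m a ⟨R - 1, by omega⟩) := by
      calc R ≤ countLe p (crit m a k) := hkR' ▸ hk
        _ = countLe p (crit m a ⟨R - 1, by omega⟩) := by rw [hck, hkey]
        _ ≤ countLe (Function.update p i 0) _ :=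
            countLe_update_le (le_of_lt (crit_pos ha _))
    have hfin : (⟨R - 1, by omega⟩ : Fin (m + 1)).1 + 1
        ≤ countLe (Function.update p i 0) (crit m a ⟨R - 1, by omega⟩) := by
      simp only [Fin.val_mk]
      omega
    have h4 := le_suCount hfin
    simp only [Fin.val_mk] at h4
    omega

lemma le_of_update (ha : 0 < a)
    (hpa : p i ≤ (suCount (crit m a) (Function.update p i 0) : ℝ) / (m + 1) * a) :
    p i ≤ (suCount (crit m a) p : ℝ) / (m + 1) * a := by
  set Ri := suCount (crit m a) (Function.update p i 0) with hRidef
  have hpos : 1 ≤ Ri := one_le_suCount_update ha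
  have hle : Ri ≤ m + 1 := suCount_le _ _
  have hkey : crit m a ⟨Ri - 1, by omega⟩ = (Ri : ℝ) / (m + 1) * a :=
    crit_cast ha hpos hle
  obtain ⟨k, hk, hkR⟩ := exists_eq_suCount (by omega : 0 < Ri)
  have hkR' : k.1 + 1 = Ri := hkR
  have hck : crit m a k = (Ri : ℝ) / (m + 1) * a := by
    rw [← hkey]; congr 1; exact Fin.ext (by simp only [Fin.val_mk]; omega)
  have hpi : p i ≤ crit m a k := hck ▸ hpa
  have heq : countLe (Function.update p i 0) (crit m a k) = countLe p (crit m a k) :=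
    countLe_update_eq (le_of_lt (crit_pos ha k)) hpi
  have h3 : Ri ≤ suCount (crit m a) p := hkR' ▸ le_suCount (heq ▸ hk)
  calc p i ≤ (Ri : ℝ) / (m + 1) * a := hpa
    _ ≤ (suCount (crit m a) p : ℝ) / (m + 1) * a := by
        have h3' : (Ri : ℝ) ≤ (suCount (crit m a) p : ℝ) := by exact_mod_cast h3
        gcongr

end Comb

section Decomp

lemma decomp {m : ℕ} {a : ℝ} (ha : 0 < a) (p : Fin (m + 1) → ℝ) (bH : Fin (m + 1) → Bool) :
    (((Finset.univ.filter fun i : Fin (m + 1) =>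
        p i ≤ (suCount (crit m a) p : ℝ) / (m + 1) * a ∧ bH i = false).card : ℝ)
      / (max (suCount (crit m a) p) 1 : ℕ))
    = ∑ i : Fin (m + 1),
        if (p i ≤ (suCount (crit m a) (Function.update p i 0) : ℝ) / (m + 1) * a
            ∧ bH i = false)
        then (suCount (crit m a) (Function.update p i 0) : ℝ)⁻¹ else 0 := by
  rw [Finset.card_filter]
  rw [Nat.cast_sum, Finset.sum_div]
  apply Finset.sum_congr rfl
  intro i _
  by_cases hc : p i ≤ (suCount (crit m a) p : ℝ) / (m + 1) * a ∧ bH i = false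
  · have heq := suCount_update_eq ha hc.1
    have hpos : 1 ≤ suCount (crit m a) p := heq ▸ one_le_suCount_update ha
    have hmax : max (suCount (crit m a) p) 1 = suCount (crit m a) p := max_eq_left hpos
    rw [if_pos hc, if_pos ⟨by rw [heq]; exact hc.1, hc.2⟩, hmax, heq]
    simp [one_div]
  · have hc' : ¬(p i ≤ (suCount (crit m a) (Function.update p i 0) : ℝ) / (m + 1) * a
        ∧ bH i = false) := by
      rintro ⟨h1, h2⟩
      exact hc ⟨le_of_update ha h1, h2⟩
    rw [if_neg hc, if_neg hc']
    simp

end Decomp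

section MainAux

variable {m : ℕ}

/-- p-values as a function on the canonical product space. -/
noncomputable def pvX {m : ℕ}
    (x : ((Fin (m + 1) → Bool) × (Fin (m + 1) → ℝ)) × (Fin (m + 1) → ℝ)) :
    Fin (m + 1) → ℝ :=
  fun j => if x.1.1 j then x.1.2 j else x.2 j

/-- the `i`-th term of the FDP decomposition. -/
noncomputable def FiX (m : ℕ) (a : ℝ) (i : Fin (m + 1))
    (x : ((Fin (m + 1) → Bool) × (Fin (m + 1) → ℝ)) × (Fin (m + 1) → ℝ)) : ℝ :=
  if (pvX x i ≤ (suCount (crit m a) (Function.update (pvX x) i 0) : ℝ) / (m + 1) * a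
      ∧ x.1.1 i = false)
  then (suCount (crit m a) (Function.update (pvX x) i 0) : ℝ)⁻¹ else 0

/-- the false discovery proportion on the canonical product space. -/
noncomputable def FX (m : ℕ) (a : ℝ)
    (x : ((Fin (m + 1) → Bool) × (Fin (m + 1) → ℝ)) × (Fin (m + 1) → ℝ)) : ℝ :=
  (((Finset.univ.filter fun i : Fin (m + 1) =>
      pvX x i ≤ (suCount (crit m a) (pvX x) : ℝ) / (m + 1) * a ∧ x.1.1 i = false).card : ℝ)
    / (max (suCount (crit m a) (pvX x)) 1 : ℕ))

lemma FX_eq_sum {a : ℝ} (ha : 0 < a)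
    (x : ((Fin (m + 1) → Bool) × (Fin (m + 1) → ℝ)) × (Fin (m + 1) → ℝ)) :
    FX m a x = ∑ i : Fin (m + 1), FiX m a i x :=
  decomp ha (pvX x) x.1.1

lemma measurable_HX {m : ℕ} (i : Fin (m + 1)) (b : Bool) :
    MeasurableSet {x : ((Fin (m + 1) → Bool) × (Fin (m + 1) → ℝ)) × (Fin (m + 1) → ℝ) |
      x.1.1 i = b} := by
  have hf : Measurable fun x : ((Fin (m + 1) → Bool) × (Fin (m + 1) → ℝ)) × (Fin (m + 1) → ℝ)
      => x.1.1 i := (measurable_fst.comp measurable_fst).eval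
  exact hf (MeasurableSet.singleton b)

lemma measurable_pvX : Measurable (pvX (m := m)) := by
  apply measurable_pi_lambda
  intro j
  apply Measurable.ite
  · exact measurable_HX j true
  · exact (measurable_snd.comp measurable_fst).eval
  · exact measurable_snd.eval

lemma measurable_updX (i : Fin (m + 1)) :
    Measurable fun x : ((Fin (m + 1) → Bool) × (Fin (m + 1) → ℝ)) × (Fin (m + 1) → ℝ) =>
      Function.update (pvX x) i (0 : ℝ) := by
  apply measurable_pi_lambda
  intro j
  rcases eq_or_ne j i with rfl | hne
  · simp only [Function.update_self]
    exact measurable_const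
  · simp only [Function.update_apply, if_neg hne]
    exact measurable_pvX.eval

lemma measurable_RiX (a : ℝ) (i : Fin (m + 1)) :
    Measurable fun x : ((Fin (m + 1) → Bool) × (Fin (m + 1) → ℝ)) × (Fin (m + 1) → ℝ) =>
      suCount (crit m a) (Function.update (pvX x) i 0) :=
  (measurable_suCount _).comp (measurable_updX i)

lemma measurable_setFiX (a : ℝ) (i : Fin (m + 1)) :
    MeasurableSet {x : ((Fin (m + 1) → Bool) × (Fin (m + 1) → ℝ)) × (Fin (m + 1) → ℝ) |
      pvX x i ≤ (suCount (crit m a) (Function.update (pvX x) i 0) : ℝ) / (m + 1) * a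
        ∧ x.1.1 i = false} := by
  have h1 : MeasurableSet {x : ((Fin (m + 1) → Bool) × (Fin (m + 1) → ℝ)) × (Fin (m + 1) → ℝ) |
      pvX x i ≤ (suCount (crit m a) (Function.update (pvX x) i 0) : ℝ) / (m + 1) * a} :=
    measurableSet_le measurable_pvX.eval
      ((measurable_of_countable fun n : ℕ => (n : ℝ) / (m + 1) * a).comp (measurable_RiX a i))
  exact h1.inter (measurable_HX i false)

lemma measurable_FiX (a : ℝ) (i : Fin (m + 1)) : Measurable (FiX m a i) := by
  unfold FiX
  exact Measurable.ite (measurable_setFiX a i)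
    ((measurable_of_countable fun n : ℕ => (n : ℝ)⁻¹).comp (measurable_RiX a i))
    measurable_const

lemma measurable_setRX (a : ℝ) (i : Fin (m + 1)) :
    MeasurableSet {x : ((Fin (m + 1) → Bool) × (Fin (m + 1) → ℝ)) × (Fin (m + 1) → ℝ) |
      pvX x i ≤ (suCount (crit m a) (pvX x) : ℝ) / (m + 1) * a ∧ x.1.1 i = false} := by
  have h1 : MeasurableSet {x : ((Fin (m + 1) → Bool) × (Fin (m + 1) → ℝ)) × (Fin (m + 1) → ℝ) |
      pvX x i ≤ (suCount (crit m a) (pvX x) : ℝ) / (m + 1) * a} :=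
    measurableSet_le measurable_pvX.eval
      ((measurable_of_countable fun n : ℕ => (n : ℝ) / (m + 1) * a).comp
        ((measurable_suCount _).comp measurable_pvX))
  exact h1.inter (measurable_HX i false)

lemma measurable_FX (a : ℝ) : Measurable (FX m a) := by
  unfold FX
  apply Measurable.div
  · apply Measurable.comp (measurable_of_countable fun n : ℕ => (n : ℝ))
    have h : (fun x : ((Fin (m + 1) → Bool) × (Fin (m + 1) → ℝ)) × (Fin (m + 1) → ℝ) =>
        (Finset.univ.filter fun i : Fin (m + 1) =>
          pvX x i ≤ (suCount (crit m a) (pvX x) : ℝ) / (m + 1) * a ∧ x.1.1 i = false).card)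
        = fun x => ∑ i : Fin (m + 1),
            if (pvX x i ≤ (suCount (crit m a) (pvX x) : ℝ) / (m + 1) * a ∧ x.1.1 i = false)
            then 1 else 0 := by
      funext x
      rw [Finset.card_filter]
    rw [h]
    apply Finset.measurable_sum
    intro i _
    exact Measurable.ite (measurable_setRX a i) measurable_const measurable_const
  · exact (measurable_of_countable fun n : ℕ => ((max n 1 : ℕ) : ℝ)).comp
      ((measurable_suCount _).comp measurable_pvX)

lemma FiX_abs_le {a : ℝ} (ha : 0 < a) (i : Fin (m + 1))
    (x : ((Fin (m + 1) → Bool) × (Fin (m + 1) → ℝ)) × (Fin (m + 1) → ℝ)) :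
    ‖FiX m a i x‖ ≤ 1 := by
  unfold FiX
  split_ifs with h
  · rw [Real.norm_eq_abs, abs_of_nonneg (by positivity)]
    have h1 : 1 ≤ suCount (crit m a) (Function.update (pvX x) i 0) :=
      one_le_suCount_update ha
    have h1' : (1 : ℝ) ≤ (suCount (crit m a) (Function.update (pvX x) i 0) : ℝ) := by
      exact_mod_cast h1
    exact inv_le_one_of_one_le₀ h1'
  · simp

end MainAux

section UnifInt

instance unif_prob : IsProbabilityMeasure (volume.restrict (Set.Ioo (0 : ℝ) 1)) := by
  constructor
  simp [Real.volume_Ioo]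

lemma integral_unif_ind {m : ℕ} {a : ℝ} (ha : a ∈ Set.Ioo (0 : ℝ) 1) {g : ℕ}
    (h1 : 1 ≤ g) (h2 : g ≤ m + 1) :
    ∫ y, (if y ≤ (g : ℝ) / (m + 1) * a then (g : ℝ)⁻¹ else 0)
      ∂(volume.restrict (Set.Ioo (0 : ℝ) 1)) = a / (m + 1) := by
  obtain ⟨ha0, ha1⟩ := ha
  have hg0 : (0 : ℝ) < g := by exact_mod_cast h1
  set t : ℝ := (g : ℝ) / (m + 1) * a with hts
  have ht0 : 0 < t := by positivity
  have ht1 : t < 1 := by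
    have hle : (g : ℝ) / (m + 1) ≤ 1 := by
      rw [div_le_one (by positivity)]
      exact_mod_cast h2
    calc t ≤ 1 * a := mul_le_mul_of_nonneg_right hle ha0.le
      _ = a := one_mul a
      _ < 1 := ha1
  have hfun : (fun y => if y ≤ t then (g : ℝ)⁻¹ else 0)
      = (Set.Iic t).indicator (fun _ => (g : ℝ)⁻¹) := by
    funext y
    simp [Set.indicator_apply, Set.mem_Iic]
  rw [hfun, integral_indicator_const _ measurableSet_Iic]
  have hmeas : (volume.restrict (Set.Ioo (0 : ℝ) 1)) (Set.Iic t) = ENNReal.ofReal t := by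
    rw [Measure.restrict_apply measurableSet_Iic]
    have hset : Set.Iic t ∩ Set.Ioo 0 1 = Set.Ioc 0 t := by
      ext x
      simp only [Set.mem_inter_iff, Set.mem_Iic, Set.mem_Ioo, Set.mem_Ioc]
      constructor
      · rintro ⟨hx1, hx2, hx3⟩
        exact ⟨hx2, hx1⟩
      · rintro ⟨hx1, hx2⟩
        exact ⟨hx2, hx1, lt_of_le_of_lt hx2 ht1⟩
    rw [hset, Real.volume_Ioc]
    norm_num
  rw [measureReal_def, hmeas, ENNReal.toReal_ofReal ht0.le, smul_eq_mul, hts]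
  field_simp

end UnifInt

section KeyInt

lemma integral_FiX {m : ℕ} {a : ℝ} (ha : a ∈ Set.Ioo (0 : ℝ) 1) (i : Fin (m + 1))
    (e : (Fin (m + 1) → Bool) × (Fin (m + 1) → ℝ)) :
    ∫ u, FiX m a i (e, u)
        ∂(Measure.pi fun _ : Fin (m + 1) => volume.restrict (Set.Ioo (0 : ℝ) 1))
      = if e.1 i = false then a / (m + 1) else 0 := by
  obtain ⟨ha0, ha1⟩ := ha
  cases hb : e.1 i with
  | true =>
    rw [if_neg (by simp [hb])]
    have h0 : ∀ u, FiX m a i (e, u) = 0 := by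
      intro u
      unfold FiX
      rw [if_neg]
      rintro ⟨-, h2⟩
      simp only at h2
      rw [hb] at h2
      simp at h2
    simp only [h0, integral_zero]
  | false =>
    rw [if_pos rfl]
    have hkey : ∀ (y : ℝ) (z : Fin m → ℝ),
        FiX m a i (e, i.insertNth y z)
          = if y ≤ (suCount (crit m a)
                (Function.update (pvX (e, i.insertNth (0 : ℝ) z)) i 0) : ℝ) / (m + 1) * a
            then (suCount (crit m a)
                (Function.update (pvX (e, i.insertNth (0 : ℝ) z)) i 0) : ℝ)⁻¹ else 0 := by
      intro y z
      have hupd : Function.update (pvX (e, i.insertNth y z)) i (0 : ℝ)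
          = Function.update (pvX (e, i.insertNth (0 : ℝ) z)) i 0 := by
        funext j
        rcases eq_or_ne j i with rfl | hne
        · simp [Function.update_self]
        · obtain ⟨j', rfl⟩ := Fin.exists_succAbove_eq hne
          simp [Function.update_apply, Fin.succAbove_ne i j', pvX,
            Fin.insertNth_apply_succAbove]
      have hpv : pvX (e, i.insertNth y z) i = y := by
        simp [pvX, hb, Fin.insertNth_apply_same]
      unfold FiX
      rw [hupd, hpv]
      simp only [hb, and_true]
  -- transfer to the product measure
    have hMP := measurePreserving_piFinSuccAbove
      (fun _ : Fin (m + 1) => volume.restrict (Set.Ioo (0 : ℝ) 1)) i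
    have hint := (hMP.symm _).integral_comp' (fun u => FiX m a i (e, u))
    rw [← hint]
    have hfun : ∀ yz : ℝ × (Fin m → ℝ),
        FiX m a i (e, (MeasurableEquiv.piFinSuccAbove (fun _ : Fin (m + 1) => ℝ) i).symm yz)
          = if yz.1 ≤ (suCount (crit m a)
                (Function.update (pvX (e, i.insertNth (0 : ℝ) yz.2)) i 0) : ℝ) / (m + 1) * a
            then (suCount (crit m a)
                (Function.update (pvX (e, i.insertNth (0 : ℝ) yz.2)) i 0) : ℝ)⁻¹ else 0 := by
      intro yz
      have hsymm : (MeasurableEquiv.piFinSuccAbove (fun _ : Fin (m + 1) => ℝ) i).symm yz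
          = i.insertNth yz.1 yz.2 := by
        simp [MeasurableEquiv.piFinSuccAbove, Fin.insertNthEquiv]
      rw [hsymm]
      exact hkey yz.1 yz.2
    have hI0 : Integrable
        (fun yz : ℝ × (Fin m → ℝ) => FiX m a i
          (e, (MeasurableEquiv.piFinSuccAbove (fun _ : Fin (m + 1) => ℝ) i).symm yz))
        ((volume.restrict (Set.Ioo (0 : ℝ) 1)).prod
          (Measure.pi fun _ : Fin m => volume.restrict (Set.Ioo (0 : ℝ) 1))) := by
      apply (integrable_const (1 : ℝ)).mono'
      · exact ((measurable_FiX a i).comp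
          (measurable_prodMk_left.comp
            (MeasurableEquiv.piFinSuccAbove (fun _ : Fin (m + 1) => ℝ) i).symm.measurable)).aestronglyMeasurable
      · exact Filter.Eventually.of_forall fun yz => FiX_abs_le ha0 i _
    simp only [hfun]
    rw [integral_prod_symm _ (hI0.congr (Filter.Eventually.of_forall hfun))]
    have hz : ∀ z : Fin m → ℝ,
        (∫ y, (if y ≤ (suCount (crit m a)
              (Function.update (pvX (e, i.insertNth (0 : ℝ) z)) i 0) : ℝ) / (m + 1) * a
            then (suCount (crit m a)
              (Function.update (pvX (e, i.insertNth (0 : ℝ) z)) i 0) : ℝ)⁻¹ else 0)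
            ∂(volume.restrict (Set.Ioo (0 : ℝ) 1))) = a / (m + 1) := by
      intro z
      exact integral_unif_ind ⟨ha0, ha1⟩ (one_le_suCount_update ha0) (suCount_le _ _)
    simp only [hz]
    simp
end KeyInt

/-- Under the Basic Independence model (`p i = (1-H_i)U_i + H_i ξ_i` with `U` i.i.d.
uniform(0,1) independent of `(H, ξ)`), the BH step-up test at level `α ∈ (0,1)` has
`FDR = (E[N₀]/n)·α`, where `N₀` is the (random) number of true null hypotheses
(`H i = false`). -/
theorem bh_fdr_BI_model {Ω : Type*} [MeasurableSpace Ω]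
    (μ : Measure Ω) [IsProbabilityMeasure μ] {m : ℕ}
    (H : Fin (m + 1) → Ω → Bool) (U ξ : Fin (m + 1) → Ω → ℝ)
    (hUmeas : ∀ i, Measurable (U i)) (hξmeas : ∀ i, Measurable (ξ i))
    (hHmeas : ∀ i, Measurable (H i))
    (hUindep : iIndepFun U μ)
    (hUHξ : IndepFun (fun ω => fun i => U i ω)
      (fun ω => ((fun i => H i ω), (fun i => ξ i ω))) μ)
    (hunif : ∀ i, Measure.map (U i) μ = volume.restrict (Set.Ioo (0 : ℝ) 1))
    (hξrange : ∀ i ω, ξ i ω ∈ Set.Icc (0 : ℝ) 1)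
    (a : ℝ) (ha : a ∈ Set.Ioo (0 : ℝ) 1) :
    ∫ ω,
        (((Finset.univ.filter fun i : Fin (m + 1) =>
            (if H i ω then ξ i ω else U i ω) ≤
              (suCount (fun k : Fin (m + 1) => ((k.1 + 1 : ℝ) / (m + 1)) * a)
                  (fun i => if H i ω then ξ i ω else U i ω) : ℝ) / (m + 1) * a
            ∧ H i ω = false).card : ℝ)
          / (max (suCount (fun k : Fin (m + 1) => ((k.1 + 1 : ℝ) / (m + 1)) * a)
              (fun i => if H i ω then ξ i ω else U i ω)) 1 : ℕ)) ∂μ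
      = (∫ ω, ((Finset.univ.filter fun i => H i ω = false).card : ℝ) ∂μ) / (m + 1) * a := by
  obtain ⟨ha0, ha1⟩ := ha
  have hW : Measurable fun ω =>
      (((fun i => H i ω, fun i => ξ i ω)) : (Fin (m + 1) → Bool) × (Fin (m + 1) → ℝ)) :=
    (measurable_pi_lambda _ fun i => hHmeas i).prodMk (measurable_pi_lambda _ fun i => hξmeas i)
  have hU : Measurable fun ω => (fun i : Fin (m + 1) => U i ω) :=
    measurable_pi_lambda _ fun i => hUmeas i
  haveI : IsProbabilityMeasure
      (μ.map fun ω => ((fun i => H i ω, fun i => ξ i ω) :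
        (Fin (m + 1) → Bool) × (Fin (m + 1) → ℝ))) :=
    Measure.isProbabilityMeasure_map hW.aemeasurable
  -- the uniform marginals form a product measure
  have hmapU : μ.map (fun ω (i : Fin (m + 1)) => U i ω)
      = Measure.pi (fun _ : Fin (m + 1) => volume.restrict (Set.Ioo (0 : ℝ) 1)) := by
    refine (Measure.pi_eq fun t ht => ?_).symm
    rw [Measure.map_apply hU (MeasurableSet.univ_pi ht)]
    have hpre : (fun ω (i : Fin (m + 1)) => U i ω) ⁻¹' (Set.univ.pi t)
        = ⋂ i, U i ⁻¹' t i := by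
      ext ω
      simp [Set.mem_univ_pi]
    rw [hpre, hUindep.meas_iInter fun i => ⟨t i, ht i, rfl⟩]
    exact Finset.prod_congr rfl fun i _ => by
      rw [← hunif i, Measure.map_apply (hUmeas i) (ht i)]
  -- the joint law is a product
  have hjoint : μ.map (fun ω =>
        ((((fun i => H i ω, fun i => ξ i ω)) :
          (Fin (m + 1) → Bool) × (Fin (m + 1) → ℝ)), fun i : Fin (m + 1) => U i ω))
      = (μ.map fun ω => ((fun i => H i ω, fun i => ξ i ω) :
          (Fin (m + 1) → Bool) × (Fin (m + 1) → ℝ))).prod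
        (Measure.pi (fun _ : Fin (m + 1) => volume.restrict (Set.Ioo (0 : ℝ) 1))) := by
    rw [← hmapU]
    exact (indepFun_iff_map_prod_eq_prod_map_map hW.aemeasurable hU.aemeasurable).mp hUHξ.symm
  have hFiInt : ∀ i : Fin (m + 1), Integrable (FiX m a i)
      ((μ.map fun ω => ((fun i => H i ω, fun i => ξ i ω) :
          (Fin (m + 1) → Bool) × (Fin (m + 1) → ℝ))).prod
        (Measure.pi (fun _ : Fin (m + 1) => volume.restrict (Set.Ioo (0 : ℝ) 1)))) := by
    intro i
    exact (integrable_const 1).mono' (measurable_FiX a i).aestronglyMeasurable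
      (Filter.Eventually.of_forall (FiX_abs_le ha0 i))
  have hper : ∀ i : Fin (m + 1),
      (∫ x, FiX m a i x
        ∂((μ.map fun ω => ((fun i => H i ω, fun i => ξ i ω) :
            (Fin (m + 1) → Bool) × (Fin (m + 1) → ℝ))).prod
          (Measure.pi (fun _ : Fin (m + 1) => volume.restrict (Set.Ioo (0 : ℝ) 1)))))
      = ∫ ω, (if H i ω = false then a / (m + 1) else 0) ∂μ := by
    intro i
    rw [MeasureTheory.integral_prod _ (hFiInt i)]
    rw [integral_congr_ae (Filter.EventuallyEq.of_eq (funext fun e => integral_FiX ⟨ha0, ha1⟩ i e))]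
    have hco : Measurable fun e : (Fin (m + 1) → Bool) × (Fin (m + 1) → ℝ) => e.1 i :=
      measurable_fst.eval
    have hset : MeasurableSet {e : (Fin (m + 1) → Bool) × (Fin (m + 1) → ℝ) | e.1 i = false} :=
      hco (MeasurableSet.singleton false)
    have hmeas' : Measurable fun e : (Fin (m + 1) → Bool) × (Fin (m + 1) → ℝ) =>
        if e.1 i = false then a / (m + 1) else 0 :=
      Measurable.ite hset measurable_const measurable_const
    rw [integral_map hW.aemeasurable hmeas'.aestronglyMeasurable]
  have hIf : ∀ i : Fin (m + 1),
      Integrable (fun ω => if H i ω = false then a / (m + 1) else 0) μ := by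
    intro i
    apply (integrable_const (a / (m + 1))).mono'
    · exact (Measurable.ite ((hHmeas i) (MeasurableSet.singleton false))
        measurable_const measurable_const).aestronglyMeasurable
    · refine Filter.Eventually.of_forall fun ω => ?_
      split_ifs with h
      · rw [Real.norm_eq_abs, abs_of_nonneg (by positivity : (0:ℝ) ≤ a / (m + 1))]
      · rw [norm_zero]
        positivity
  calc
    ∫ ω,
        (((Finset.univ.filter fun i : Fin (m + 1) =>
            (if H i ω then ξ i ω else U i ω) ≤
              (suCount (fun k : Fin (m + 1) => ((k.1 + 1 : ℝ) / (m + 1)) * a)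
                  (fun i => if H i ω then ξ i ω else U i ω) : ℝ) / (m + 1) * a
            ∧ H i ω = false).card : ℝ)
          / (max (suCount (fun k : Fin (m + 1) => ((k.1 + 1 : ℝ) / (m + 1)) * a)
              (fun i => if H i ω then ξ i ω else U i ω)) 1 : ℕ)) ∂μ
      = ∫ ω, FX m a (((fun i => H i ω, fun i => ξ i ω) :
          (Fin (m + 1) → Bool) × (Fin (m + 1) → ℝ)), fun i : Fin (m + 1) => U i ω) ∂μ := rfl
    _ = ∫ x, FX m a x ∂(μ.map (fun ω =>
          ((((fun i => H i ω, fun i => ξ i ω)) :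
            (Fin (m + 1) → Bool) × (Fin (m + 1) → ℝ)), fun i : Fin (m + 1) => U i ω))) :=
        (integral_map (hW.prodMk hU).aemeasurable (measurable_FX a).aestronglyMeasurable).symm
    _ = ∫ x, FX m a x
          ∂((μ.map fun ω => ((fun i => H i ω, fun i => ξ i ω) :
              (Fin (m + 1) → Bool) × (Fin (m + 1) → ℝ))).prod
            (Measure.pi (fun _ : Fin (m + 1) => volume.restrict (Set.Ioo (0 : ℝ) 1)))) := by
        rw [hjoint]
    _ = ∫ x, (∑ i : Fin (m + 1), FiX m a i x)
          ∂((μ.map fun ω => ((fun i => H i ω, fun i => ξ i ω) :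
              (Fin (m + 1) → Bool) × (Fin (m + 1) → ℝ))).prod
            (Measure.pi (fun _ : Fin (m + 1) => volume.restrict (Set.Ioo (0 : ℝ) 1)))) :=
        integral_congr_ae (Filter.EventuallyEq.of_eq (funext (FX_eq_sum ha0)))
    _ = ∑ i : Fin (m + 1), ∫ x, FiX m a i x
          ∂((μ.map fun ω => ((fun i => H i ω, fun i => ξ i ω) :
              (Fin (m + 1) → Bool) × (Fin (m + 1) → ℝ))).prod
            (Measure.pi (fun _ : Fin (m + 1) => volume.restrict (Set.Ioo (0 : ℝ) 1)))) :=
        integral_finset_sum _ fun i _ => hFiInt i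
    _ = ∑ i : Fin (m + 1), ∫ ω, (if H i ω = false then a / (m + 1) else 0) ∂μ :=
        Finset.sum_congr rfl fun i _ => hper i
    _ = ∫ ω, (∑ i : Fin (m + 1), if H i ω = false then a / (m + 1) else 0) ∂μ :=
        (integral_finset_sum _ fun i _ => hIf i).symm
    _ = ∫ ω, ((Finset.univ.filter fun i => H i ω = false).card : ℝ) * (a / (m + 1)) ∂μ := by
        refine integral_congr_ae (Filter.EventuallyEq.of_eq (funext fun ω => ?_))
        rw [Finset.card_filter, Nat.cast_sum, Finset.sum_mul]
        refine Finset.sum_congr rfl fun i _ => ?_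
        split_ifs with h <;> simp
    _ = (∫ ω, ((Finset.univ.filter fun i => H i ω = false).card : ℝ) ∂μ) * (a / (m + 1)) :=
        integral_mul_const _ _
    _ = (∫ ω, ((Finset.univ.filter fun i => H i ω = false).card : ℝ) ∂μ) / (m + 1) * a := by
        ring
end

section
/- Let p = (p_1,...,p_n) with p_1 ∈ [0,1], p^{(1)} = (0, p_2,...,p_n), and deterministic nondecreasing critical values 0 < α_{1:n} ≤ ... ≤ α_{n:n} < 1. With R the step-up count (R = max{i : p_{i:n} ≤ α_{i:n}}, max∅ = 0), one has ∫_0^1 [1{p_1 ≤ α_{R(p_1, p_2,...,p_n):n}} / R(p_1, p_2,...,p_n)] dp_1 = α_{R(p^{(1)}):n} / R(p^{(1)}). -/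
open MeasureTheory ProbabilityTheory Finset
open scoped Classical

lemma countLe_update_le_s19 {m : ℕ} (p : Fin (m+1) → ℝ) {u : ℝ} (hu : 0 ≤ u) (t : ℝ) :
    countLe (Function.update p 0 u) t ≤ countLe (Function.update p 0 0) t := by
  apply Finset.card_le_card
  intro i hi
  simp only [Finset.mem_filter, Finset.mem_univ, true_and] at *
  rcases eq_or_ne i 0 with rfl | h
  · simp only [Function.update_self] at *
    exact hu.trans hi
  · simpa [Function.update_of_ne h] using hi

lemma countLe_update_eq_s19 {m : ℕ} (p : Fin (m+1) → ℝ) {u t : ℝ} (hu : 0 ≤ u) (hut : u ≤ t) :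
    countLe (Function.update p 0 u) t = countLe (Function.update p 0 0) t := by
  unfold countLe
  congr 1
  apply Finset.filter_congr
  intro i _
  rcases eq_or_ne i 0 with rfl | h
  · simp [hut, hu.trans hut]
  · simp [Function.update_of_ne h]

lemma suCount_update_le {m : ℕ} (c : Fin (m+1) → ℝ) (p : Fin (m+1) → ℝ) {u : ℝ}
    (hu : 0 ≤ u) :
    suCount c (Function.update p 0 u) ≤ suCount c (Function.update p 0 0) := by
  apply Finset.sup_mono
  intro k hk
  simp only [Finset.mem_filter, Finset.mem_univ, true_and] at *
  exact hk.trans (countLe_update_le_s19 p hu _)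

/-- The leave-one-out integral identity for step-up tests:
`∫_0^1 1{p_1 ≤ α_{R:n}} / R dp_1 = α_{R(p⁽¹⁾):n} / R(p⁽¹⁾)`. -/
theorem stepUp_leave_one_out_integral {m : ℕ} (c : Fin (m + 1) → ℝ) (hmono : Monotone c)
    (hc0 : 0 < c 0) (hc1 : c (Fin.last m) < 1)
    (p : Fin (m + 1) → ℝ) (hp : ∀ i, p i ∈ Set.Icc (0 : ℝ) 1) :
    ∫ u in Set.Icc (0 : ℝ) 1,
        (if u ≤ threshold c (suCount c (Function.update p 0 u)) then (1 : ℝ) else 0)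
          / (suCount c (Function.update p 0 u) : ℝ)
      = threshold c (suCount c (Function.update p 0 0))
          / (suCount c (Function.update p 0 0) : ℝ) := by
  set R0 := suCount c (Function.update p 0 0) with hR0
  clear_value R0
  have hR0le : R0 ≤ m + 1 := by
    rw [hR0]; exact Finset.sup_le fun k _ => k.2
  have hR0pos : 0 < R0 := by
    have h0 : (0 : Fin (m+1)) ∈
        Finset.univ.filter (fun i => Function.update p 0 0 i ≤ c 0) := by
      simp [hc0.le]
    have hcount : 1 ≤ countLe (Function.update p 0 0) (c 0) :=
      Finset.card_pos.2 ⟨0, h0⟩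
    have hmem : (0 : Fin (m+1)) ∈ Finset.univ.filter
        (fun k : Fin (m+1) => k.1 + 1 ≤ countLe (Function.update p 0 0) (c k)) := by
      simpa using (show 0 < countLe (Function.update p 0 0) (c 0) from hcount)
    rw [hR0]
    calc 0 < 0 + 1 := Nat.zero_lt_one
    _ ≤ _ := Finset.le_sup (f := fun k : Fin (m+1) => k.1 + 1) hmem
  set t0 := threshold c R0 with ht0
  have ht0eq : t0 = c ⟨R0 - 1, by omega⟩ := by
    rw [ht0]; unfold threshold; rw [dif_pos ⟨hR0pos, hR0le⟩]
  have ht0pos : 0 < t0 := by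
    rw [ht0eq]; exact lt_of_lt_of_le hc0 (hmono (Fin.zero_le _))
  have ht0lt : t0 < 1 := by
    rw [ht0eq]; exact lt_of_le_of_lt (hmono (Fin.le_last _)) hc1
  -- the sup is attained
  have hfne : (Finset.univ.filter fun k : Fin (m+1) =>
      k.1 + 1 ≤ countLe (Function.update p 0 0) (c k)).Nonempty := by
    by_contra h
    rw [Finset.not_nonempty_iff_eq_empty] at h
    have : R0 = 0 := by rw [hR0]; unfold suCount; rw [h]; simp
    omega
  obtain ⟨k0, hk0mem, hk0⟩ :=
    Finset.exists_mem_eq_sup _ hfne (fun k : Fin (m+1) => k.1 + 1)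
  have hk0val : k0.1 + 1 = R0 := by rw [hR0]; unfold suCount; exact hk0.symm
  have hck0 : c k0 = t0 := by
    have hv : (k0 : ℕ) = R0 - 1 := by omega
    rw [ht0eq]; congr 1; exact Fin.ext hv
  have hk0count : R0 ≤ countLe (Function.update p 0 0) (c k0) := by
    simp only [Finset.mem_filter, Finset.mem_univ, true_and] at hk0mem
    omega
  -- R(u) = R0 when 0 ≤ u ≤ t0
  have hReq : ∀ u : ℝ, 0 ≤ u → u ≤ t0 → suCount c (Function.update p 0 u) = R0 := by
    intro u hu hut
    refine le_antisymm (hR0 ▸ suCount_update_le c p hu) ?_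
    have hmem : k0 ∈ Finset.univ.filter
        (fun k : Fin (m+1) => k.1 + 1 ≤ countLe (Function.update p 0 u) (c k)) := by
      simp only [Finset.mem_filter, Finset.mem_univ, true_and]
      rw [countLe_update_eq_s19 p hu (hck0 ▸ hut)]
      omega
    have hle : k0.1 + 1 ≤ suCount c (Function.update p 0 u) :=
      Finset.le_sup (f := fun k : Fin (m+1) => k.1 + 1) hmem
    omega
  have hthr_le : ∀ Ru : ℕ, Ru ≤ R0 → threshold c Ru ≤ t0 := by
    intro Ru hRu
    unfold threshold
    split_ifs with h
    · rw [ht0eq]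
      exact hmono (by simp only [Fin.mk_le_mk]; omega)
    · exact ht0pos.le
  -- pointwise identification of the integrand
  have hpt : Set.EqOn
      (fun u => (if u ≤ threshold c (suCount c (Function.update p 0 u)) then (1 : ℝ) else 0)
          / (suCount c (Function.update p 0 u) : ℝ))
      (Set.indicator (Set.Iic t0) fun _ => (R0 : ℝ)⁻¹) (Set.Icc 0 1) := by
    intro u hu
    obtain ⟨hu0, hu1⟩ := hu
    by_cases h : u ≤ t0
    · have hR : suCount c (Function.update p 0 u) = R0 := hReq u hu0 h
      simp only [hR, ← ht0, if_pos h, Set.indicator_of_mem (Set.mem_Iic.2 h)]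
      rw [one_div]
    · have hle : threshold c (suCount c (Function.update p 0 u)) ≤ t0 :=
        hthr_le _ (hR0 ▸ suCount_update_le c p hu0)
      simp only [Set.indicator_of_notMem (fun hh => h (Set.mem_Iic.1 hh))]
      rw [if_neg (fun hh => h (hh.trans hle)), zero_div]
  rw [setIntegral_congr_fun measurableSet_Icc hpt,
    MeasureTheory.setIntegral_indicator measurableSet_Iic]
  have hinter : Set.Icc (0:ℝ) 1 ∩ Set.Iic t0 = Set.Icc 0 t0 := by
    ext x
    simp only [Set.mem_inter_iff, Set.mem_Icc, Set.mem_Iic]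
    constructor
    · rintro ⟨⟨h1, _⟩, h2⟩; exact ⟨h1, h2⟩
    · rintro ⟨h1, h2⟩; exact ⟨⟨h1, h2.trans ht0lt.le⟩, h2⟩
  rw [hinter, setIntegral_const, measureReal_def, Real.volume_Icc,
    ENNReal.toReal_ofReal (by linarith), smul_eq_mul]
  ring_nf
end
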